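/- The trace of the matrix $J = \begin{pmatrix} 0 & 0 & \frac{-r_1 a_q m}{e(r_1 a_q + r_2 q_2)} & \frac{-a_q m (r_1+r_2)^2}{e(r_1 a_q + r_2 q_2)} \\ 0 & 0 & \frac{-r_2 m}{e(r_1 a_q + r_2 q_2)} & \frac{m(r_1+r_2)^2}{e(r_1 a_q + r_2 q_2)} \\ e r_1 & e r_2 q_2 & 0 & \frac{e(a_q - q_2) m (r_1+r_2)^2}{e(r_1 a_q + r_2 q_2)} \\ \frac{r_1 r_2}{(r_1+r_2)^2} & \frac{-a_q r_1 r_2}{(r_1+r_2)^2} & 0 & 0 \end{pmatrix}$ is zero, and its determinant equals $\frac{a_q r_1 r_2 m^2 (r_1+r_2)}{e(a_q r_1 + q_2 r_2)}$, which is strictly positive for positive parameters. -/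

import Mathlib

open Matrix in
lemma my_det_fin_four {R : Type*} [CommRing R] (A : Matrix (Fin 4) (Fin 4) R) :
    A.det =
      A 0 0 * (A 1 1 * (A 2 2 * A 3 3 - A 2 3 * A 3 2) - A 1 2 * (A 2 1 * A 3 3 - A 2 3 * A 3 1)
        + A 1 3 * (A 2 1 * A 3 2 - A 2 2 * A 3 1))
      - A 0 1 * (A 1 0 * (A 2 2 * A 3 3 - A 2 3 * A 3 2) - A 1 2 * (A 2 0 * A 3 3 - A 2 3 * A 3 0)
        + A 1 3 * (A 2 0 * A 3 2 - A 2 2 * A 3 0))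
      + A 0 2 * (A 1 0 * (A 2 1 * A 3 3 - A 2 3 * A 3 1) - A 1 1 * (A 2 0 * A 3 3 - A 2 3 * A 3 0)
        + A 1 3 * (A 2 0 * A 3 1 - A 2 1 * A 3 0))
      - A 0 3 * (A 1 0 * (A 2 1 * A 3 2 - A 2 2 * A 3 1) - A 1 1 * (A 2 0 * A 3 2 - A 2 2 * A 3 0)
        + A 1 2 * (A 2 0 * A 3 1 - A 2 1 * A 3 0)) := by
  rw [Matrix.det_succ_row_zero]
  simp [Fin.sum_univ_succ, Matrix.det_fin_three, Fin.succAbove,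
    show ((2:Fin 3).succ : Fin 4) = 3 from rfl, show (Fin.castSucc (2:Fin 3) : Fin 4) = 2 from rfl]
  ring

theorem stmt15 (r1 r2 e m q2 aq : ℝ)
    (hr1 : r1 > 0) (hr2 : r2 > 0) (he : e > 0) (hm : m > 0)
    (hq2 : q2 > 0) (haq : aq > 0) :
    let J : Matrix (Fin 4) (Fin 4) ℝ :=
      !![0, 0, -r1*aq*m/(e*(r1*aq + r2*q2)), -aq*m*(r1+r2)^2/(e*(r1*aq + r2*q2));
         0, 0, -r2*m/(e*(r1*aq + r2*q2)), m*(r1+r2)^2/(e*(r1*aq + r2*q2));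
         e*r1, e*r2*q2, 0, e*(aq - q2)*m*(r1+r2)^2/(e*(r1*aq + r2*q2));
         r1*r2/(r1+r2)^2, -aq*r1*r2/(r1+r2)^2, 0, 0]
    Matrix.trace J = 0 ∧
    J.det = aq*r1*r2*m^2*(r1+r2) / (e*(aq*r1 + q2*r2)) ∧
    0 < aq*r1*r2*m^2*(r1+r2) / (e*(aq*r1 + q2*r2)) := by
  intro J
  have hd : e*(r1*aq + r2*q2) ≠ 0 := by positivity
  have hd2 : e*(aq*r1 + q2*r2) ≠ 0 := by positivity
  have hs : (r1+r2)^2 ≠ 0 := by positivity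
  refine ⟨?_, ?_, by positivity⟩
  · simp [J, Matrix.trace, Matrix.diag, Fin.sum_univ_four]
  · rw [my_det_fin_four]
    simp only [J, Matrix.of_apply, Matrix.cons_val', Matrix.cons_val_zero, Matrix.cons_val_one, Matrix.head_cons,
      Matrix.empty_val', Matrix.cons_val_fin_one, Matrix.head_fin_const,
      Matrix.cons_val_two, Matrix.tail_cons, Matrix.cons_val_three]
    field_simp
    ring
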